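/- In oriented Bernoulli percolation on L at parameter p, for all integers k, ℓ ≥ 1 and every integer C ≥ 1, V_p(k, Cℓ) ≥ P_p(E(k,ℓ))^{2C}, where E(k,ℓ) is the event that {0}×[0,ℓ] is connected to {k}×[2ℓ,3ℓ] or to [0,k]×{3ℓ} inside [0,k]×ℤ. -/

import Mathlib

open MeasureTheory
open scoped Classical

namespace OrientedPerc

/-- Vertices of the plane; the lattice `L` consists of those with even coordinate sum. -/
abbrev Vtx := ℤ × ℤ

/-- An oriented edge is given by its base vertex and a direction:
`true` for the edge to `x + (1,1)`, `false` for the edge to `x + (-1,1)`. -/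
abbrev Edge := Vtx × Bool

/-- A percolation configuration: each oriented edge is open (`true`) or closed. -/
abbrev Config := Edge → Bool

/-- The endpoint of an oriented edge. -/
def tip (e : Edge) : Vtx := e.1 + (if e.2 then (1, 1) else (-1, 1))

/-- One open oriented step from `x` to `y`. -/
def Step (ω : Config) (x y : Vtx) : Prop :=
  ∃ b : Bool, ω (x, b) = true ∧ y = tip (x, b)

/-- `x → y`: there is an open oriented path from `x` to `y`. -/
def Conn (ω : Config) (x y : Vtx) : Prop := Relation.ReflTransGen (Step ω) x y

/-- `x → y` using only vertices in the set `S`. -/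
def ConnIn (S : Set Vtx) (ω : Config) (x y : Vtx) : Prop :=
  x ∈ S ∧ Relation.ReflTransGen (fun a b => Step ω a b ∧ b ∈ S) x y

/-- The box `[a,b] × [c,d]` intersected with the lattice `L`. -/
def box (a b c d : ℤ) : Set Vtx :=
  {v | a ≤ v.1 ∧ v.1 ≤ b ∧ c ≤ v.2 ∧ v.2 ≤ d ∧ Even (v.1 + v.2)}

/-- The box `[a,b] × [c,d]` is crossed vertically (bottom to top). -/
def CrossedVert (ω : Config) (a b c d : ℤ) : Prop :=
  ∃ x y : Vtx, x.2 = c ∧ y.2 = d ∧ ConnIn (box a b c d) ω x y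

/-- The box `[a,b] × [c,d]` is crossed from left to right. -/
def CrossedLR (ω : Config) (a b c d : ℤ) : Prop :=
  ∃ x y : Vtx, x.1 = a ∧ y.1 = b ∧ ConnIn (box a b c d) ω x y

/-- `μ` is Bernoulli oriented bond percolation with parameter `p`:
the states of edges are i.i.d., each open with probability `p`. -/
def IsBernoulli (μ : Measure Config) (p : ℝ) : Prop :=
  IsProbabilityMeasure μ ∧ p ∈ Set.Icc (0 : ℝ) 1 ∧
    ∀ (s : Finset Edge) (f : Edge → Bool),
      (μ {ω | ∀ e ∈ s, ω e = f e}).toReal = ∏ e ∈ s, (if f e then p else 1 - p)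

/-- Probability of a vertical crossing of `[0,m] × [0,n]`. -/
noncomputable def V (μ : Measure Config) (m n : ℕ) : ℝ :=
  (μ {ω | CrossedVert ω 0 (m : ℤ) 0 (n : ℤ)}).toReal

/-- Probability of a left-right crossing of `[0,m] × [0,n]`. -/
noncomputable def H (μ : Measure Config) (m n : ℕ) : ℝ :=
  (μ {ω | CrossedLR ω 0 (m : ℤ) 0 (n : ℤ)}).toReal

/-- The event `R_n ≥ t`: some `(y,0)` with `y ≤ 0` even is connected to some
`(x,n)` with `x ≥ t`. -/
def Rge (ω : Config) (n t : ℤ) : Prop :=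
  ∃ x y : ℤ, Even y ∧ y ≤ 0 ∧ t ≤ x ∧ Conn ω (y, 0) (x, n)

/-- The event `0 → ℓ_n`. -/
def ConnToLine (ω : Config) (n : ℤ) : Prop := ∃ x : ℤ, Conn ω (0, 0) (x, n)


/-- The strip `[0,k] × ℤ` intersected with the lattice `L`. -/
def strip (k : ℤ) : Set Vtx := {v | 0 ≤ v.1 ∧ v.1 ≤ k ∧ Even (v.1 + v.2)}

/-- The event `E(k,ℓ)`: `{0} × [0,ℓ]` is connected to `{k} × [2ℓ,3ℓ]` or to
`[0,k] × {3ℓ}` inside the strip `[0,k] × ℤ`. -/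
def Ekl (ω : Config) (k ℓ : ℤ) : Prop :=
  ∃ x y : Vtx, x.1 = 0 ∧ 0 ≤ x.2 ∧ x.2 ≤ ℓ ∧
    ((y.1 = k ∧ 2 * ℓ ≤ y.2 ∧ y.2 ≤ 3 * ℓ) ∨ (y.2 = 3 * ℓ ∧ 0 ≤ y.1 ∧ y.1 ≤ k)) ∧
    ConnIn (strip k) ω x y

/-! ### Probability core -/

def IncrSet (A : Set Config) : Prop :=
  ∀ ω ω' : Config, (∀ e, ω e = true → ω' e = true) → ω ∈ A → ω' ∈ A

def DetBy (s : Finset Edge) (A : Set Config) : Prop :=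
  ∀ ω ω' : Config, (∀ e ∈ s, ω e = ω' e) → ω ∈ A → ω' ∈ A

lemma DetBy.mono {s s' : Finset Edge} {A : Set Config} (h : DetBy s A) (hs : s ⊆ s') :
    DetBy s' A := fun ω ω' hag => h ω ω' (fun e he => hag e (hs he))

lemma DetBy.inter {s : Finset Edge} {A B : Set Config} (hA : DetBy s A) (hB : DetBy s B) :
    DetBy s (A ∩ B) := fun ω ω' hag hm => ⟨hA ω ω' hag hm.1, hB ω ω' hag hm.2⟩

lemma IncrSet.inter {A B : Set Config} (hA : IncrSet A) (hB : IncrSet B) :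
    IncrSet (A ∩ B) := fun ω ω' hle hm => ⟨hA ω ω' hle hm.1, hB ω ω' hle hm.2⟩

def cfg (T : Finset Edge) : Config := fun e => decide (e ∈ T)

noncomputable def cylW (p : ℝ) (s T : Finset Edge) : ℝ :=
  ∏ e ∈ s, if e ∈ T then p else 1 - p

noncomputable def Esum (p : ℝ) (s : Finset Edge) (f : Config → ℝ) : ℝ :=
  ∑ T ∈ s.powerset, cylW p s T * f (cfg T)

def Cyl (s : Finset Edge) (f : Config) : Set Config := {ω : Config | ∀ e ∈ s, ω e = f e}

lemma cylinder_measurable (s : Finset Edge) (f : Edge → Bool) :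
    MeasurableSet (Cyl s f) := by
  have : Cyl s f = ⋂ e ∈ s, (fun ω : Config => ω e) ⁻¹' {f e} := by
    ext ω; simp [Cyl]
  rw [this]
  exact MeasurableSet.biInter s.countable_toSet
    (fun e _ => (measurable_pi_apply e) (measurableSet_singleton (f e)))

lemma detby_decomp {s : Finset Edge} {A : Set Config} (hdet : DetBy s A) :
    A = ⋃ T ∈ s.powerset.filter (fun T => cfg T ∈ A), Cyl s (cfg T) := by
  classical
  ext ω
  simp only [Set.mem_iUnion, Finset.mem_filter, Finset.mem_powerset, Cyl, Set.mem_setOf_eq]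
  constructor
  · intro hω
    have key : ∀ e ∈ s, ω e = cfg (s.filter (fun e => ω e = true)) e := by
      intro e he
      simp only [cfg, Finset.mem_filter]
      cases h : ω e <;> simp [he, h]
    exact ⟨s.filter (fun e => ω e = true),
      ⟨Finset.filter_subset _ _, hdet ω _ key hω⟩, key⟩
  · rintro ⟨T, ⟨-, hT⟩, hag⟩
    exact hdet (cfg T) ω (fun e he => (hag e he).symm) hT

lemma detby_measurable {s : Finset Edge} {A : Set Config} (hdet : DetBy s A) :
    MeasurableSet A := by
  classical
  rw [detby_decomp hdet]
  exact MeasurableSet.biUnion (Finset.countable_toSet _)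
    (fun T _ => cylinder_measurable s (cfg T))

lemma measure_eq_Esum {μ : Measure Config} {p : ℝ} (hP : IsProbabilityMeasure μ)
    (hform : ∀ (s : Finset Edge) (f : Edge → Bool),
      (μ {ω | ∀ e ∈ s, ω e = f e}).toReal = ∏ e ∈ s, (if f e then p else 1 - p))
    {s : Finset Edge} {A : Set Config} (hdet : DetBy s A) :
    (μ A).toReal = Esum p s (fun ω => if ω ∈ A then 1 else 0) := by
  classical
  set 𝒯 := s.powerset.filter (fun T => cfg T ∈ A) with h𝒯
  have hdisj : Set.PairwiseDisjoint ↑𝒯 (fun T => Cyl s (cfg T)) := by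
    intro T hT T' hT' hne
    rw [h𝒯] at hT hT'
    simp only [Finset.coe_filter, Set.mem_setOf_eq, Finset.mem_powerset] at hT hT'
    refine Set.disjoint_left.2 ?_
    intro ω hω hω'
    apply hne
    apply Finset.ext
    intro e
    by_cases hes : e ∈ s
    · have h1 := hω e hes
      have h2 := hω' e hes
      have heq : cfg T e = cfg T' e := by rw [← h1, h2]
      simp only [cfg, decide_eq_decide] at heq
      constructor
      · intro h; exact heq.mp h
      · intro h; exact heq.mpr h
    · constructor
      · intro h; exact absurd (hT.1 h) hes
      · intro h; exact absurd (hT'.1 h) hes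
  have hμ : μ A = ∑ T ∈ 𝒯, μ (Cyl s (cfg T)) := by
    have := measure_biUnion_finset (μ := μ) hdisj (fun T _ => cylinder_measurable s (cfg T))
    rw [detby_decomp hdet, ← h𝒯, this]
  have htr : (μ A).toReal = ∑ T ∈ 𝒯, (μ (Cyl s (cfg T))).toReal := by
    rw [hμ]; exact ENNReal.toReal_sum (fun T _ => measure_ne_top μ _)
  have hcyl : ∀ T : Finset Edge, (μ (Cyl s (cfg T))).toReal = cylW p s T := by
    intro T
    rw [show (Cyl s (cfg T)) = {ω : Config | ∀ e ∈ s, ω e = cfg T e} from rfl, hform s (cfg T)]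
    unfold cylW
    refine Finset.prod_congr rfl (fun e _ => ?_)
    by_cases h : e ∈ T <;> simp [cfg, h]
  rw [htr]
  unfold Esum
  rw [h𝒯, Finset.sum_filter]
  refine Finset.sum_congr rfl (fun T hT => ?_)
  by_cases h : cfg T ∈ A <;> simp [h, hcyl T]


/-! ### Harris inequality -/


def MonoFn (f : Config → ℝ) : Prop :=
  ∀ ω ω' : Config, (∀ e, ω e = true → ω' e = true) → f ω ≤ f ω'

def updE (e : Edge) (v : Bool) (ω : Config) : Config :=
  fun e' => if e' = e then v else ω e'

lemma cfg_insert (a : Edge) (T : Finset Edge) : cfg (insert a T) = updE a true (cfg T) := by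
  funext e'
  simp only [cfg, updE, Finset.mem_insert]
  by_cases h : e' = a <;> simp [h]

lemma cfg_notmem (a : Edge) (T : Finset Edge) (h : a ∉ T) : cfg T = updE a false (cfg T) := by
  funext e'
  simp only [cfg, updE]
  by_cases he : e' = a <;> simp [he, h]

lemma Esum_insert (p : ℝ) {a : Edge} {s : Finset Edge} (ha : a ∉ s) (f : Config → ℝ) :
    Esum p (insert a s) f
      = (1 - p) * Esum p s (fun ω => f (updE a false ω))
        + p * Esum p s (fun ω => f (updE a true ω)) := by
  unfold Esum
  rw [Finset.sum_powerset_insert ha]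
  have h1 : ∀ T ∈ s.powerset, cylW p (insert a s) T * f (cfg T)
      = (1 - p) * (cylW p s T * f (updE a false (cfg T))) := by
    intro T hT
    rw [Finset.mem_powerset] at hT
    have haT : a ∉ T := fun h => ha (hT h)
    have : cylW p (insert a s) T = (1 - p) * cylW p s T := by
      unfold cylW
      rw [Finset.prod_insert ha, if_neg haT]
    rw [this, ← cfg_notmem a T haT]
    ring
  have h2 : ∀ T ∈ s.powerset, cylW p (insert a s) (insert a T) * f (cfg (insert a T))
      = p * (cylW p s T * f (updE a true (cfg T))) := by
    intro T hT
    rw [Finset.mem_powerset] at hT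
    have : cylW p (insert a s) (insert a T) = p * cylW p s T := by
      unfold cylW
      rw [Finset.prod_insert ha, if_pos (Finset.mem_insert_self a T)]
      congr 1
      refine Finset.prod_congr rfl (fun e he => ?_)
      have : e ≠ a := fun h => ha (h ▸ he)
      simp [Finset.mem_insert, this]
    rw [this, cfg_insert]
    ring
  rw [Finset.sum_congr rfl h1, Finset.sum_congr rfl h2,
    ← Finset.mul_sum, ← Finset.mul_sum]

lemma MonoFn.upd {f : Config → ℝ} (hf : MonoFn f) (a : Edge) (v : Bool) :
    MonoFn (fun ω => f (updE a v ω)) := by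
  intro ω ω' hle
  apply hf
  intro e he
  simp only [updE] at he ⊢
  by_cases h : e = a
  · simpa [h] using he
  · simp only [if_neg h] at he ⊢; exact hle e he

lemma updE_le (a : Edge) (ω : Config) : ∀ e, updE a false ω e = true → updE a true ω e = true := by
  intro e he
  simp only [updE] at he ⊢
  by_cases h : e = a
  · simp [h]
  · simpa [h] using he

lemma Esum_nonneg {p : ℝ} (hp0 : 0 ≤ p) (hp1 : p ≤ 1) (s : Finset Edge) {f : Config → ℝ}
    (hf : ∀ ω, 0 ≤ f ω) : 0 ≤ Esum p s f := by
  refine Finset.sum_nonneg (fun T _ => mul_nonneg ?_ (hf _))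
  exact Finset.prod_nonneg (fun e _ => by split <;> linarith)

lemma Esum_mono {p : ℝ} (hp0 : 0 ≤ p) (hp1 : p ≤ 1) (s : Finset Edge) {f g : Config → ℝ}
    (hfg : ∀ ω, f ω ≤ g ω) : Esum p s f ≤ Esum p s g := by
  refine Finset.sum_le_sum (fun T _ => ?_)
  have : (0:ℝ) ≤ cylW p s T := Finset.prod_nonneg (fun e _ => by split <;> linarith)
  exact mul_le_mul_of_nonneg_left (hfg _) this

lemma harris_Esum {p : ℝ} (hp0 : 0 ≤ p) (hp1 : p ≤ 1) (s : Finset Edge)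
    {f g : Config → ℝ} (hf : MonoFn f) (hg : MonoFn g)
    (hf0 : ∀ ω, 0 ≤ f ω) (hg0 : ∀ ω, 0 ≤ g ω) :
    Esum p s f * Esum p s g ≤ Esum p s (fun ω => f ω * g ω) := by
  classical
  induction s using Finset.induction_on generalizing f g with
  | empty =>
      simp [Esum, cylW]
  | @insert a s ha ih =>
      rw [Esum_insert p ha f, Esum_insert p ha g, Esum_insert p ha (fun ω => f ω * g ω)]
      have hff := ih (hf.upd a false) (hg.upd a false) (fun ω => hf0 _) (fun ω => hg0 _)
      have hft := ih (hf.upd a true) (hg.upd a true) (fun ω => hf0 _) (fun ω => hg0 _)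
      set F0 := Esum p s (fun ω => f (updE a false ω)) with hF0
      set F1 := Esum p s (fun ω => f (updE a true ω)) with hF1
      set G0 := Esum p s (fun ω => g (updE a false ω)) with hG0
      set G1 := Esum p s (fun ω => g (updE a true ω)) with hG1
      have hFle : F0 ≤ F1 := Esum_mono hp0 hp1 s (fun ω => hf _ _ (updE_le a ω))
      have hGle : G0 ≤ G1 := Esum_mono hp0 hp1 s (fun ω => hg _ _ (updE_le a ω))
      have hF0n : 0 ≤ F0 := Esum_nonneg hp0 hp1 s (fun ω => hf0 _)
      have hG0n : 0 ≤ G0 := Esum_nonneg hp0 hp1 s (fun ω => hg0 _)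
      have key : ((1-p) * F0 + p * F1) * ((1-p) * G0 + p * G1)
          ≤ (1-p) * (F0 * G0) + p * (F1 * G1) := by
        nlinarith [mul_nonneg (mul_nonneg hp0 (by linarith : (0:ℝ) ≤ 1 - p))
          (mul_nonneg (by linarith : (0:ℝ) ≤ F1 - F0) (by linarith : (0:ℝ) ≤ G1 - G0))]
      calc ((1-p) * F0 + p * F1) * ((1-p) * G0 + p * G1)
          ≤ (1-p) * (F0 * G0) + p * (F1 * G1) := key
        _ ≤ (1-p) * Esum p s (fun ω => f (updE a false ω) * g (updE a false ω))
              + p * Esum p s (fun ω => f (updE a true ω) * g (updE a true ω)) := by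
            have h1 : (0:ℝ) ≤ 1 - p := by linarith
            exact add_le_add (mul_le_mul_of_nonneg_left hff h1)
              (mul_le_mul_of_nonneg_left hft hp0)


lemma indicator_mono {A : Set Config} (hA : IncrSet A) :
    MonoFn (fun ω => if ω ∈ A then (1:ℝ) else 0) := by
  intro ω ω' hle
  by_cases h : ω ∈ A
  · simp [h, hA ω ω' hle h]
  · by_cases h' : ω' ∈ A <;> simp [h, h']

lemma harris_measure {μ : Measure Config} {p : ℝ} (hP : IsProbabilityMeasure μ)
    (hp0 : 0 ≤ p) (hp1 : p ≤ 1)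
    (hform : ∀ (s : Finset Edge) (f : Edge → Bool),
      (μ {ω | ∀ e ∈ s, ω e = f e}).toReal = ∏ e ∈ s, (if f e then p else 1 - p))
    {s : Finset Edge} {A B : Set Config}
    (hdA : DetBy s A) (hdB : DetBy s B) (hiA : IncrSet A) (hiB : IncrSet B) :
    (μ A).toReal * (μ B).toReal ≤ (μ (A ∩ B)).toReal := by
  rw [measure_eq_Esum hP hform hdA, measure_eq_Esum hP hform hdB,
    measure_eq_Esum hP hform (hdA.inter hdB)]
  have := harris_Esum hp0 hp1 s (indicator_mono hiA) (indicator_mono hiB)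
    (fun ω => by positivity) (fun ω => by positivity)
  refine this.trans (le_of_eq ?_)
  unfold Esum
  refine Finset.sum_congr rfl (fun T _ => ?_)
  congr 1
  by_cases h1 : cfg T ∈ A <;> by_cases h2 : cfg T ∈ B <;>
    simp [h1, h2, Set.mem_inter_iff]

lemma pullback_prob {μ : Measure Config} {p : ℝ} (hP : IsProbabilityMeasure μ)
    (hform : ∀ (s : Finset Edge) (f : Edge → Bool),
      (μ {ω | ∀ e ∈ s, ω e = f e}).toReal = ∏ e ∈ s, (if f e then p else 1 - p))
    {s : Finset Edge} {A : Set Config} (hdet : DetBy s A)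
    (F : Edge → Edge) (hF : Function.Injective F) :
    (μ ((fun ω => ω ∘ F) ⁻¹' A)).toReal = (μ A).toReal := by
  have hdet' : DetBy (s.image F) ((fun ω => ω ∘ F) ⁻¹' A) := by
    intro ω ω' hag hm
    refine hdet (ω ∘ F) (ω' ∘ F) (fun e he => ?_) hm
    exact hag (F e) (Finset.mem_image_of_mem F he)
  rw [measure_eq_Esum hP hform hdet', measure_eq_Esum hP hform hdet]
  unfold Esum
  refine Finset.sum_nbij' (fun T => s.filter (fun e => F e ∈ T)) (fun T => T.image F)
    ?_ ?_ ?_ ?_ ?_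
  · intro T hT
    simp only [Finset.mem_powerset] at *
    exact Finset.filter_subset _ _
  · intro T hT
    simp only [Finset.mem_powerset] at *
    exact Finset.image_subset_image hT
  · intro T hT
    simp only [Finset.mem_powerset] at hT
    apply Finset.ext
    intro t
    simp only [Finset.mem_image, Finset.mem_filter]
    constructor
    · rintro ⟨e, ⟨he, hFe⟩, rfl⟩; exact hFe
    · intro ht
      obtain ⟨e, hes, rfl⟩ := Finset.mem_image.mp (hT ht)
      exact ⟨e, ⟨hes, ht⟩, rfl⟩
  · intro T hT
    simp only [Finset.mem_powerset] at hT
    apply Finset.ext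
    intro e
    simp only [Finset.mem_filter, Finset.mem_image]
    constructor
    · rintro ⟨hes, e', he', heq⟩
      exact (hF heq) ▸ he'
    · intro he
      exact ⟨hT he, e, he, rfl⟩
  · intro T hT
    simp only [Finset.mem_powerset] at hT
    have hcfg : cfg T ∘ F = cfg (s.filter (fun e => F e ∈ T)) := by
      funext e
      simp only [cfg, Function.comp_apply, Finset.mem_filter, decide_eq_decide]
      constructor
      · intro h
        obtain ⟨e', he's, heq⟩ := Finset.mem_image.mp (hT h)
        exact ⟨(hF heq) ▸ he's, h⟩
      · exact fun h => h.2
    have hw : cylW p (s.image F) T = cylW p s (s.filter (fun e => F e ∈ T)) := by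
      unfold cylW
      rw [Finset.prod_image (fun a _ b _ h => hF h)]
      refine Finset.prod_congr rfl (fun e he => ?_)
      by_cases h : F e ∈ T <;> simp [Finset.mem_filter, he, h]
    rw [hw]
    congr 1
    simp only [Set.mem_preimage]
    rw [hcfg]


/-! ### Monotone path functions -/

def PFn (ω : Config) (k : ℤ) (f : ℤ → ℤ) (a e : ℤ) : Prop :=
  (∀ y, a ≤ y → y ≤ e → 0 ≤ f y ∧ f y ≤ k ∧ Even (f y + y)) ∧
  (∀ y, a ≤ y → y < e → Step ω (f y, y) (f (y + 1), y + 1))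

lemma step_tip {ω : Config} {x y : Vtx} (h : Step ω x y) :
    y.2 = x.2 + 1 ∧ (y.1 = x.1 + 1 ∨ y.1 = x.1 - 1) := by
  obtain ⟨b, -, rfl⟩ := h
  cases b
  · simp only [tip, Prod.ext_iff, if_neg Bool.false_ne_true]
    constructor
    · simp
    · right; simp; ring
  · simp only [tip, Prod.ext_iff, if_pos rfl]
    constructor
    · simp
    · left; simp

lemma connIn_to_pfn {ω : Config} {k : ℤ} {x y : Vtx} (h : ConnIn (strip k) ω x y) :
    x.2 ≤ y.2 ∧ ∃ f : ℤ → ℤ, PFn ω k f x.2 y.2 ∧ f x.2 = x.1 ∧ f y.2 = y.1 := by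
  obtain ⟨hxS, hrtg⟩ := h
  induction hrtg with
  | refl =>
      refine ⟨le_refl _, fun _ => x.1, ⟨?_, ?_⟩, rfl, rfl⟩
      · intro z hz hz'
        have : z = x.2 := le_antisymm hz' hz
        subst this
        exact ⟨hxS.1, hxS.2.1, hxS.2.2⟩
      · intro z hz hz'; omega
  | @tail b c hab hbc ih =>
      obtain ⟨hle, f, ⟨hbd, hstep⟩, hfa, hfb⟩ := ih
      obtain ⟨hstepbc, hcS⟩ := hbc
      have hc2 : c.2 = b.2 + 1 := (step_tip hstepbc).1
      refine ⟨by omega, fun z => if z = c.2 then c.1 else f z, ⟨?_, ?_⟩, ?_, ?_⟩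
      · intro z hz hz'
        dsimp only
        by_cases hzc : z = c.2
        · subst hzc
          simpa using ⟨hcS.1, hcS.2.1, hcS.2.2⟩
        · rw [if_neg hzc]
          exact hbd z hz (by omega)
      · intro z hz hz'
        dsimp only
        by_cases hzb : z = b.2
        · subst hzb
          rw [if_neg (by omega), if_pos (by omega), hfb]
          have h1 : ((b.1 : ℤ), (b.2 : ℤ)) = b := rfl
          rw [h1]
          convert hstepbc using 2
          omega
        · rw [if_neg (by omega), if_neg (by omega)]
          exact hstep z hz (by omega)
      · dsimp only; rw [if_neg (by omega), hfa]
      · dsimp only; rw [if_pos rfl]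

lemma pfn_to_connIn {ω : Config} {k : ℤ} {f : ℤ → ℤ} {a e : ℤ} (S : Set Vtx)
    (hpf : PFn ω k f a e) (hae : a ≤ e)
    (hS : ∀ y, a ≤ y → y ≤ e → (f y, y) ∈ S) :
    ConnIn S ω (f a, a) (f e, e) := by
  obtain ⟨hbd, hstep⟩ := hpf
  refine ⟨hS a le_rfl hae, ?_⟩
  have key : ∀ z, a ≤ z → z ≤ e →
      Relation.ReflTransGen (fun u v => Step ω u v ∧ v ∈ S) (f a, a) (f z, z) := by
    intro z hz
    refine Int.le_induction (motive := fun n _ => n ≤ e →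
      Relation.ReflTransGen (fun u v => Step ω u v ∧ v ∈ S) (f a, a) (f n, n))
      ?_ ?_ z hz
    · intro _; exact Relation.ReflTransGen.refl
    · intro n hn ih hne
      exact Relation.ReflTransGen.tail (ih (by omega))
        ⟨hstep n hn (by omega), hS (n+1) (by omega) hne⟩
  exact key e hae le_rfl

lemma pfn_ivt {ω : Config} {k : ℤ} {f g : ℤ → ℤ} {af ef ag eg lo hi : ℤ}
    (hf : PFn ω k f af ef) (hg : PFn ω k g ag eg)
    (hfl : af ≤ lo) (hfh : hi ≤ ef) (hgl : ag ≤ lo) (hgh : hi ≤ eg)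
    (hlohi : lo ≤ hi)
    (h1 : f lo ≤ g lo) (h2 : g hi ≤ f hi) :
    ∃ m, lo ≤ m ∧ m ≤ hi ∧ f m = g m := by
  by_contra hcon
  push_neg at hcon
  have key : ∀ z, lo ≤ z → z ≤ hi → f z < g z := by
    intro z hz
    refine Int.le_induction (motive := fun n _ => n ≤ hi → f n < g n) ?_ ?_ z hz
    · intro _
      rcases lt_or_eq_of_le h1 with h | h
      · exact h
      · exact absurd h (hcon lo le_rfl hlohi)
    · intro n hn ih hne
      have hlt : f n < g n := ih (by omega)
      have hfs := step_tip (hf.2 n (by omega) (by omega))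
      have hgs := step_tip (hg.2 n (by omega) (by omega))
      simp only at hfs hgs
      have hef : Even (f n + n) := (hf.1 n (by omega) (by omega)).2.2
      have heg : Even (g n + n) := (hg.1 n (by omega) (by omega)).2.2
      have hev : (f n + n) % 2 = 0 := Int.even_iff.mp hef
      have hev' : (g n + n) % 2 = 0 := Int.even_iff.mp heg
      have hne2 : f (n+1) ≠ g (n+1) := hcon (n+1) (by omega) hne
      omega
  exact absurd h2 (not_le.mpr (key hi hlohi le_rfl))

lemma pfn_splice {ω : Config} {k : ℤ} {f g : ℤ → ℤ} {af m eg : ℤ}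
    (hf : PFn ω k f af m) (hg : PFn ω k g m eg)
    (hafm : af ≤ m) (hmeg : m ≤ eg) (hfg : f m = g m) :
    PFn ω k (fun y => if y < m then f y else g y) af eg ∧
    (if af < m then f af else g af) = f af ∧
    (if eg < m then f eg else g eg) = g eg := by
  refine ⟨⟨?_, ?_⟩, ?_, ?_⟩
  · intro y hy hy'
    dsimp only
    by_cases h : y < m
    · rw [if_pos h]; exact hf.1 y hy (by omega)
    · rw [if_neg h]; exact hg.1 y (by omega) hy'
  · intro y hy hy'
    dsimp only
    by_cases h : y + 1 < m
    · rw [if_pos (by omega), if_pos h]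
      exact hf.2 y hy (by omega)
    · by_cases h' : y < m
      · have hym : y + 1 = m := by omega
        rw [if_pos h', if_neg h]
        have hval : g (y + 1) = f (y + 1) := by rw [hym]; exact hfg.symm
        rw [hval]
        exact hf.2 y hy (by omega)
      · rw [if_neg h', if_neg h]
        exact hg.2 y (by omega) hy'
  · by_cases h : af < m
    · rw [if_pos h]
    · rw [if_neg h]
      have : af = m := by omega
      rw [this, hfg]
  · by_cases h : eg < m
    · have : eg = m := by omega
      rw [if_pos h, this, hfg]
    · rw [if_neg h]


/-! ### Structured form of the event `E(k,ℓ)` -/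

def EklSet (k ℓ : ℤ) : Set Config := {ω | Ekl ω k ℓ}

lemma pfn_restrict {ω : Config} {k : ℤ} {f : ℤ → ℤ} {a e a' e' : ℤ}
    (h : PFn ω k f a e) (ha : a ≤ a') (he : e' ≤ e) : PFn ω k f a' e' :=
  ⟨fun y hy hy' => h.1 y (by omega) (by omega),
   fun y hy hy' => h.2 y (by omega) (by omega)⟩

lemma pfn_mono {ω ω' : Config} {k : ℤ} {f : ℤ → ℤ} {a e : ℤ}
    (hle : ∀ e', ω e' = true → ω' e' = true) (h : PFn ω k f a e) : PFn ω' k f a e := by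
  refine ⟨h.1, fun y hy hy' => ?_⟩
  obtain ⟨b, hb, htip⟩ := h.2 y hy hy'
  exact ⟨b, hle _ hb, htip⟩

lemma ekl_iff {k ℓ : ℤ} (hl : 1 ≤ ℓ) (ω : Config) :
    Ekl ω k ℓ ↔ ∃ (f : ℤ → ℤ) (a e : ℤ), PFn ω k f a e ∧ f a = 0 ∧ 0 ≤ a ∧ a ≤ ℓ ∧ a ≤ e ∧
      2 * ℓ ≤ e ∧ e ≤ 3 * ℓ ∧ (f e = k ∨ e = 3 * ℓ) := by
  constructor
  · rintro ⟨x, y, hx1, hx2, hx3, hy, hconn⟩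
    obtain ⟨hle, f, hpf, hfa, hfe⟩ := connIn_to_pfn hconn
    refine ⟨f, x.2, y.2, hpf, by rw [hfa, hx1], hx2, hx3, hle, ?_, ?_, ?_⟩
    · rcases hy with ⟨-, h, -⟩ | ⟨h, -, -⟩ <;> omega
    · rcases hy with ⟨-, -, h⟩ | ⟨h, -, -⟩ <;> omega
    · rcases hy with ⟨h, -, -⟩ | ⟨h, -, -⟩
      · left; rw [hfe, h]
      · right; exact h
  · rintro ⟨f, a, e, hpf, hfa, ha0, hal, hae, h2e, h3e, hend⟩
    refine ⟨(f a, a), (f e, e), hfa, ha0, hal, ?_, ?_⟩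
    · rcases hend with h | h
      · exact Or.inl ⟨h, h2e, h3e⟩
      · exact Or.inr ⟨h, (hpf.1 e (by omega) le_rfl).1, (hpf.1 e (by omega) le_rfl).2.1⟩
    · exact pfn_to_connIn (strip k) hpf hae
        (fun y hy hy' => ⟨(hpf.1 y hy hy').1, (hpf.1 y hy hy').2.1, (hpf.1 y hy hy').2.2⟩)

/-- determining edge set for `E(k,ℓ)` -/
noncomputable def sE (k ℓ : ℤ) : Finset Edge :=
  ((Finset.Icc (0:ℤ) k) ×ˢ (Finset.Icc (0:ℤ) (3*ℓ - 1))) ×ˢ (Finset.univ : Finset Bool)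

lemma detby_ekl {k ℓ : ℤ} (hl : 1 ≤ ℓ) : DetBy (sE k ℓ) (EklSet k ℓ) := by
  intro ω ω' hag hω
  rw [EklSet, Set.mem_setOf_eq, ekl_iff hl] at hω ⊢
  obtain ⟨f, a, e, hpf, hfa, ha0, hal, hae, h2e, h3e, hend⟩ := hω
  refine ⟨f, a, e, ⟨hpf.1, fun y hy hy' => ?_⟩, hfa, ha0, hal, hae, h2e, h3e, hend⟩
  obtain ⟨b, hb, htip⟩ := hpf.2 y hy hy'
  refine ⟨b, ?_, htip⟩
  rw [← hag ((f y, y), b) ?_]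
  · exact hb
  · have hbd := hpf.1 y (by omega) (by omega)
    simp only [sE, Finset.mem_product, Finset.mem_Icc, Finset.mem_univ, and_true]
    refine ⟨⟨hbd.1, hbd.2.1⟩, by omega, by omega⟩

lemma incr_ekl {k ℓ : ℤ} : IncrSet (EklSet k ℓ) := by
  intro ω ω' hle hω
  obtain ⟨x, y, hx1, hx2, hx3, hy, hxS, hconn⟩ := hω
  refine ⟨x, y, hx1, hx2, hx3, hy, hxS, ?_⟩
  refine Relation.ReflTransGen.mono ?_ x y hconn
  rintro u v ⟨⟨b, hb, htip⟩, hvS⟩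
  exact ⟨⟨b, hle _ hb, htip⟩, hvS⟩

/-! ### Edge maps: vertical translation and vertical flip -/

def trE (t : ℤ) : Edge → Edge := fun e => ((e.1.1, e.1.2 + t), e.2)

lemma trE_inj (t : ℤ) : Function.Injective (trE t) := by
  rintro ⟨⟨x1, x2⟩, b⟩ ⟨⟨y1, y2⟩, c⟩ h
  simp only [trE, Prod.ext_iff] at h
  obtain ⟨⟨h1, h2⟩, h3⟩ := h
  simp only [Prod.ext_iff]
  exact ⟨⟨h1, by omega⟩, h3⟩

def flE (M : ℤ) : Edge → Edge :=
  fun e => ((e.1.1 + (if e.2 then 1 else -1), M - e.1.2 - 1), !e.2)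

lemma flE_invol (M : ℤ) (e : Edge) : flE M (flE M e) = e := by
  obtain ⟨⟨x1, x2⟩, b⟩ := e
  cases b <;> simp [flE] <;> omega

lemma flE_inj (M : ℤ) : Function.Injective (flE M) :=
  Function.LeftInverse.injective (g := flE M) (flE_invol M)

lemma step_trE {ω : Config} {t : ℤ} {x y : Vtx} (h : Step (ω ∘ trE t) x y) :
    Step ω (x.1, x.2 + t) (y.1, y.2 + t) := by
  obtain ⟨b, hb, rfl⟩ := h
  refine ⟨b, hb, ?_⟩
  cases b <;> simp [tip, trE, Prod.ext_iff] <;> ring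

lemma step_flE {ω : Config} {M : ℤ} {x y : Vtx} (h : Step (ω ∘ flE M) x y) :
    Step ω (y.1, M - y.2) (x.1, M - x.2) := by
  obtain ⟨b, hb, rfl⟩ := h
  refine ⟨!b, ?_, ?_⟩
  · have hedge : ((((tip (x,b)).1 : ℤ), (M - (tip (x,b)).2 : ℤ)), !b) = flE M (x, b) := by
      cases b <;> simp [tip, flE, Prod.ext_iff] <;> omega
    rw [hedge]
    exact hb
  · cases b <;> simp [tip, flE, Prod.ext_iff] <;> omega

lemma pfn_shift {ω : Config} {k t : ℤ} {f : ℤ → ℤ} {a e : ℤ} (ht : Even t)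
    (h : PFn (ω ∘ trE t) k f a e) :
    PFn ω k (fun y => f (y - t)) (a + t) (e + t) := by
  constructor
  · intro y hy hy'
    dsimp only
    have hbd := h.1 (y - t) (by omega) (by omega)
    refine ⟨hbd.1, hbd.2.1, ?_⟩
    have h1 : f (y - t) + y = (f (y - t) + (y - t)) + t := by ring
    rw [h1]
    exact hbd.2.2.add ht
  · intro y hy hy'
    dsimp only
    have hstep := step_trE (h.2 (y - t) (by omega) (by omega))
    simp only at hstep
    have h1 : y - t + t = y := by ring
    have h2 : y - t + 1 + t = y + 1 := by ring
    have h3 : y + 1 - t = y - t + 1 := by ring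
    rw [h1, h2] at hstep
    rw [h3]
    exact hstep

lemma pfn_flip {ω : Config} {k M : ℤ} {f : ℤ → ℤ} {a e : ℤ} (hM : Even M)
    (h : PFn (ω ∘ flE M) k f a e) :
    PFn ω k (fun y => f (M - y)) (M - e) (M - a) := by
  constructor
  · intro y hy hy'
    dsimp only
    have hbd := h.1 (M - y) (by omega) (by omega)
    refine ⟨hbd.1, hbd.2.1, ?_⟩
    have h2 : Even (f (M - y) + (M - y)) := hbd.2.2
    have h3 : f (M - y) + y = (f (M - y) + (M - y)) - M + 2 * y := by ring
    rw [h3]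
    exact ((h2.sub hM).add (even_two_mul y))
  · intro y hy hy'
    dsimp only
    have hstep := step_flE (h.2 (M - y - 1) (by omega) (by omega))
    simp only at hstep
    have h1 : M - (M - y - 1 + 1) = y := by ring
    have h2 : M - (M - y - 1) = y + 1 := by ring
    have h0 : M - y - 1 + 1 = M - y := by ring
    rw [h1, h2, h0] at hstep
    have h3 : M - (y + 1) = M - y - 1 := by ring
    rw [h3]
    exact hstep


/-! ### Stage construction -/

lemma even_of_pfn_zero {ω : Config} {k : ℤ} {f : ℤ → ℤ} {a e y : ℤ}
    (h : PFn ω k f a e) (hy : a ≤ y) (hy' : y ≤ e) (h0 : f y = 0) : Even y := by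
  have := (h.1 y hy hy').2.2
  rw [h0, zero_add] at this
  exact this

lemma pi_data {ω : Config} {k ℓ t : ℤ} (hl : 1 ≤ ℓ) (ht : Even t)
    (hω : (ω ∘ trE t) ∈ EklSet k ℓ) :
    ∃ (f : ℤ → ℤ) (a e : ℤ), PFn ω k f a e ∧ f a = 0 ∧ t ≤ a ∧ a ≤ t + ℓ ∧ a ≤ e ∧
      t + 2*ℓ ≤ e ∧ e ≤ t + 3*ℓ ∧ (f e = k ∨ e = t + 3*ℓ) := by
  rw [EklSet, Set.mem_setOf_eq, ekl_iff hl] at hω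
  obtain ⟨f, a, e, hpf, hfa, ha0, hal, hae, h2e, h3e, hend⟩ := hω
  refine ⟨fun y => f (y - t), a + t, e + t, pfn_shift ht hpf, ?_, by omega, by omega,
    by omega, by omega, by omega, ?_⟩
  · simp only [add_sub_cancel_right]; exact hfa
  · simp only [add_sub_cancel_right]
    rcases hend with h | h
    · exact Or.inl h
    · exact Or.inr (by omega)

lemma delta_data {ω : Config} {k ℓ M : ℤ} (hl : 1 ≤ ℓ) (hM : Even M)
    (hω : (ω ∘ flE M) ∈ EklSet k ℓ) :
    ∃ (g : ℤ → ℤ) (b eh : ℤ), PFn ω k g b eh ∧ g eh = 0 ∧ M - 3*ℓ ≤ b ∧ b ≤ M - 2*ℓ ∧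
      b ≤ eh ∧ M - ℓ ≤ eh ∧ eh ≤ M ∧ (g b = k ∨ b = M - 3*ℓ) := by
  rw [EklSet, Set.mem_setOf_eq, ekl_iff hl] at hω
  obtain ⟨f, a, e, hpf, hfa, ha0, hal, hae, h2e, h3e, hend⟩ := hω
  refine ⟨fun y => f (M - y), M - e, M - a, pfn_flip hM hpf, ?_, by omega, by omega,
    by omega, by omega, by omega, ?_⟩
  · simp only [sub_sub_cancel]; exact hfa
  · simp only [sub_sub_cancel]
    rcases hend with h | h
    · exact Or.inl h
    · exact Or.inr (by omega)

lemma stage {ω : Config} {k ℓ ℓm t : ℤ} (hl : 1 ≤ ℓ) (hlm0 : 0 ≤ ℓm) (hlml : ℓm ≤ ℓ)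
    (hlm1 : ℓ ≤ ℓm + 1) (hlme : Even ℓm) (hte : Even t)
    (hπ : (ω ∘ trE t) ∈ EklSet k ℓ) (hδ : (ω ∘ flE (t + 2*ℓ + ℓm)) ∈ EklSet k ℓ) :
    ∃ (h : ℤ → ℤ) (a e : ℤ), PFn ω k h a e ∧ h a = 0 ∧ h e = 0 ∧ t ≤ a ∧ a ≤ t + ℓm ∧
      t + 2*ℓ ≤ e ∧ e ≤ t + 2*ℓ + ℓm := by
  have hMe : Even (t + 2*ℓ + ℓm) := by
    have h2 : Even (2*ℓ) := even_two_mul ℓ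
    exact (hte.add h2).add hlme
  obtain ⟨f, a, e, hpf, hfa, hta, hal, hae, h2e, h3e, hend⟩ := pi_data hl hte hπ
  obtain ⟨g, b, eh, hpg, hgeh, hb1, hb2, hbeh, heh1, heh2, hstart⟩ := delta_data hl hMe hδ
  set M := t + 2*ℓ + ℓm with hM
  -- parity facts
  have haE : Even a := even_of_pfn_zero hpf le_rfl hae hfa
  have hehE : Even eh := even_of_pfn_zero hpg hbeh le_rfl hgeh
  have haEm : a % 2 = 0 := Int.even_iff.mp haE
  have hehEm : eh % 2 = 0 := Int.even_iff.mp hehE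
  have htEm : t % 2 = 0 := Int.even_iff.mp hte
  have hlmEm : ℓm % 2 = 0 := Int.even_iff.mp hlme
  have halm : a ≤ t + ℓm := by omega
  have heh2l : t + 2*ℓ ≤ eh := by omega
  -- IVT between f and g on [max a b, min e eh]
  have hlo_le_hi : max a b ≤ min e eh := by
    simp only [max_le_iff, le_min_iff]
    refine ⟨⟨by omega, by omega⟩, by omega, by omega⟩
  have h1 : f (max a b) ≤ g (max a b) := by
    rcases le_or_gt b a with hba | hab
    · rw [max_eq_left hba, hfa]
      exact (hpg.1 a hba (by omega)).1
    · rw [max_eq_right (le_of_lt hab)]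
      rcases hstart with h | h
      · rw [h]
        exact (hpf.1 b (by omega) (by omega)).2.1
      · omega
  have h2 : g (min e eh) ≤ f (min e eh) := by
    rcases le_or_gt eh e with hee | hee
    · rw [min_eq_right hee, hgeh]
      exact (hpf.1 eh (by omega) hee).1
    · rw [min_eq_left (le_of_lt hee)]
      rcases hend with h | h
      · rw [h]
        exact (hpg.1 e (by omega) (by omega)).2.1
      · omega
  obtain ⟨m, hm1, hm2, hm3⟩ := pfn_ivt hpf hpg (le_max_left a b) (min_le_left e eh)
    (le_max_right a b) (min_le_right e eh) hlo_le_hi h1 h2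
  have ham : a ≤ m := le_trans (le_max_left a b) hm1
  have hmeh : m ≤ eh := le_trans hm2 (min_le_right e eh)
  obtain ⟨hsp, hv1, hv2⟩ := pfn_splice (pfn_restrict hpf le_rfl (le_trans hm2 (min_le_left e eh)))
    (pfn_restrict hpg (le_trans (le_max_right a b) hm1) le_rfl) ham hmeh hm3
  refine ⟨_, a, eh, hsp, by rw [hv1, hfa], by rw [hv2, hgeh], hta, halm, heh2l, by omega⟩

/-! ### Chaining the stages -/

lemma chain {ω : Config} {k ℓ ℓm : ℤ} (hl : 1 ≤ ℓ) (hlm0 : 0 ≤ ℓm) (hlml : ℓm ≤ ℓ)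
    (C : ℕ)
    (hstage : ∀ i : ℕ, i < C → ∃ (h : ℤ → ℤ) (a e : ℤ),
      PFn ω k h a e ∧ h a = 0 ∧ h e = 0 ∧
      (-ℓm + (i:ℤ) * (2*ℓ - ℓm)) ≤ a ∧ a ≤ (-ℓm + (i:ℤ) * (2*ℓ - ℓm)) + ℓm ∧
      (-ℓm + (i:ℤ) * (2*ℓ - ℓm)) + 2*ℓ ≤ e ∧ e ≤ (-ℓm + (i:ℤ) * (2*ℓ - ℓm)) + 2*ℓ + ℓm) :
    ∀ i : ℕ, i < C → ∃ (σ : ℤ → ℤ) (a e : ℤ),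
      PFn ω k σ a e ∧ σ a = 0 ∧ σ e = 0 ∧ a ≤ 0 ∧
      (-ℓm + (i:ℤ) * (2*ℓ - ℓm)) + 2*ℓ ≤ e ∧ e ≤ (-ℓm + (i:ℤ) * (2*ℓ - ℓm)) + 2*ℓ + ℓm := by
  intro i
  induction i with
  | zero =>
      intro hi
      obtain ⟨h, a, e, hpf, ha0, he0, h1, h2, h3, h4⟩ := hstage 0 hi
      exact ⟨h, a, e, hpf, ha0, he0, by push_cast at h2 ⊢; omega,
        by push_cast at h3 ⊢; omega, by push_cast at h4 ⊢; omega⟩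
  | succ i ih =>
      intro hi
      obtain ⟨σ, aσ, eσ, hpσ, hσa, hσe, haσ0, heσ1, heσ2⟩ := ih (by omega)
      obtain ⟨h, a', e', hph, ha'0, he'0, h1, h2, h3, h4⟩ := hstage (i+1) hi
      -- arithmetic
      have hs0 : (0:ℤ) ≤ 2*ℓ - ℓm := by omega
      have hmul : (2*ℓ - ℓm) ≤ ((i:ℤ)+1) * (2*ℓ - ℓm) := by
        have h1i : (1:ℤ) ≤ (i:ℤ)+1 := by omega
        nlinarith
      have hi1 : ((i:ℤ)+1) * (2*ℓ - ℓm) = (i:ℤ) * (2*ℓ - ℓm) + (2*ℓ - ℓm) := by ring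
      push_cast at h1 h2 h3 h4
      have ha'nn : 0 ≤ a' := by omega
      have ha'eσ : a' ≤ eσ := by omega
      have heσe' : eσ ≤ e' := by omega
      -- IVT between h and σ on [a', eσ]
      have hanchor1 : h a' ≤ σ a' := by
        rw [ha'0]; exact (hpσ.1 a' (by omega) (by omega)).1
      have hanchor2 : σ eσ ≤ h eσ := by
        rw [hσe]; exact (hph.1 eσ (by omega) (by omega)).1
      obtain ⟨m, hm1, hm2, hm3⟩ := pfn_ivt hph hpσ le_rfl heσe' (by omega) le_rfl
        ha'eσ hanchor1 hanchor2
      -- splice σ (up to m) with h (from m)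
      obtain ⟨hsp, hv1, hv2⟩ := pfn_splice (pfn_restrict hpσ le_rfl hm2)
        (pfn_restrict hph (by omega) le_rfl) (by omega) (by omega) hm3.symm
      exact ⟨_, aσ, e', hsp, by rw [hv1, hσa], by rw [hv2, he'0], haσ0,
        by push_cast; omega, by push_cast; omega⟩




/-! ### Iterated Harris inequality -/

lemma detby_biInter {s : Finset Edge} (F : ℕ → Set Config) :
    ∀ n : ℕ, (∀ i, i < n → DetBy s (F i)) → DetBy s (⋂ i ∈ Finset.range n, F i) := by
  intro n
  induction n with
  | zero => intro _ ω ω' hag hm; simp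
  | succ n ih =>
      intro hdet ω ω' hag hm
      rw [Finset.range_add_one] at hm ⊢
      simp only [Finset.set_biInter_insert] at hm ⊢
      exact ⟨hdet n (by omega) ω ω' hag hm.1,
        ih (fun i hi => hdet i (by omega)) ω ω' hag hm.2⟩

lemma incr_biInter (F : ℕ → Set Config) :
    ∀ n : ℕ, (∀ i, i < n → IncrSet (F i)) → IncrSet (⋂ i ∈ Finset.range n, F i) := by
  intro n
  induction n with
  | zero => intro _ ω ω' hag hm; simp
  | succ n ih =>
      intro hinc ω ω' hag hm
      rw [Finset.range_add_one] at hm ⊢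
      simp only [Finset.set_biInter_insert] at hm ⊢
      exact ⟨hinc n (by omega) ω ω' hag hm.1,
        ih (fun i hi => hinc i (by omega)) ω ω' hag hm.2⟩

lemma harris_iter {μ : Measure Config} {p : ℝ} (hP : IsProbabilityMeasure μ)
    (hp0 : 0 ≤ p) (hp1 : p ≤ 1)
    (hform : ∀ (s : Finset Edge) (f : Edge → Bool),
      (μ {ω | ∀ e ∈ s, ω e = f e}).toReal = ∏ e ∈ s, (if f e then p else 1 - p))
    {s : Finset Edge} (F : ℕ → Set Config) :
    ∀ n : ℕ, (∀ i, i < n → DetBy s (F i)) → (∀ i, i < n → IncrSet (F i)) →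
      ∏ i ∈ Finset.range n, (μ (F i)).toReal ≤ (μ (⋂ i ∈ Finset.range n, F i)).toReal := by
  intro n
  induction n with
  | zero => intro _ _; simp
  | succ n ih =>
      intro hdet hinc
      rw [Finset.range_add_one, Finset.prod_insert (Finset.notMem_range_self)]
      have hset : (⋂ i ∈ insert n (Finset.range n), F i)
          = F n ∩ ⋂ i ∈ Finset.range n, F i := by
        simp only [Finset.set_biInter_insert]
      rw [hset]
      calc (μ (F n)).toReal * ∏ i ∈ Finset.range n, (μ (F i)).toReal
          ≤ (μ (F n)).toReal * (μ (⋂ i ∈ Finset.range n, F i)).toReal :=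
            mul_le_mul_of_nonneg_left
              (ih (fun i hi => hdet i (by omega)) (fun i hi => hinc i (by omega)))
              ENNReal.toReal_nonneg
        _ ≤ (μ (F n ∩ ⋂ i ∈ Finset.range n, F i)).toReal :=
            harris_measure hP hp0 hp1 hform (hdet n (by omega))
              (detby_biInter F n (fun i hi => hdet i (by omega)))
              (hinc n (by omega))
              (incr_biInter F n (fun i hi => hinc i (by omega)))

lemma detby_pullback {s : Finset Edge} {A : Set Config} (hdet : DetBy s A) (F : Edge → Edge) :
    DetBy (s.image F) ((fun ω => ω ∘ F) ⁻¹' A) := by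
  intro ω ω' hag hm
  exact hdet (ω ∘ F) (ω' ∘ F) (fun e he => hag (F e) (Finset.mem_image_of_mem F he)) hm

lemma incr_pullback {A : Set Config} (hinc : IncrSet A) (F : Edge → Edge) :
    IncrSet ((fun ω => ω ∘ F) ⁻¹' A) := by
  intro ω ω' hle hm
  exact hinc (ω ∘ F) (ω' ∘ F) (fun e he => hle (F e) he) hm

/-- `V_p(k, Cℓ) ≥ P_p(E(k,ℓ))^(2C)`. -/
theorem vertical_crossing_from_Ekl (μ : Measure Config) (p : ℝ) (hB : IsBernoulli μ p)
    (k ℓ C : ℕ) (hk : 1 ≤ k) (hℓ : 1 ≤ ℓ) (hC : 1 ≤ C) :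
    (μ {ω | Ekl ω (k : ℤ) (ℓ : ℤ)}).toReal ^ (2 * C) ≤ V μ k (C * ℓ) := by
  classical
  obtain ⟨hP, hp, hform⟩ := hB
  obtain ⟨hp0, hp1⟩ := hp
  have hl1 : (1:ℤ) ≤ (ℓ:ℤ) := by exact_mod_cast hℓ
  set kk : ℤ := (k : ℤ) with hkk
  set ll : ℤ := (ℓ : ℤ) with hll
  set ℓm : ℤ := 2 * (ll / 2) with hℓm
  have hlm0 : 0 ≤ ℓm := by omega
  have hlml : ℓm ≤ ll := by omega
  have hlm1 : ll ≤ ℓm + 1 := by omega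
  have hlme : Even ℓm := ⟨ll / 2, by ring⟩
  have hte : ∀ i : ℕ, Even (-ℓm + (i:ℤ) * (2 * ll - ℓm)) := by
    intro i
    exact ⟨-(ll/2) + (i:ℤ) * (ll - ll/2), by rw [hℓm]; ring⟩
  -- the 2C events
  set Atr : ℕ → Set Config :=
    fun i => (fun ω => ω ∘ trE (-ℓm + (i:ℤ) * (2 * ll - ℓm))) ⁻¹' (EklSet kk ll) with hAtr
  set Bfl : ℕ → Set Config :=
    fun i => (fun ω => ω ∘ flE ((-ℓm + (i:ℤ) * (2 * ll - ℓm)) + 2 * ll + ℓm)) ⁻¹'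
      (EklSet kk ll) with hBfl
  set Fev : ℕ → Set Config := fun i => Atr i ∩ Bfl i with hFev
  have hdetE : DetBy (sE kk ll) (EklSet kk ll) := detby_ekl hl1
  have hincE : IncrSet (EklSet kk ll) := incr_ekl
  set BIG : Finset Edge := (Finset.range C).biUnion
    (fun i => (sE kk ll).image (trE (-ℓm + (i:ℤ) * (2 * ll - ℓm)))
      ∪ (sE kk ll).image (flE ((-ℓm + (i:ℤ) * (2 * ll - ℓm)) + 2 * ll + ℓm))) with hBIG
  have hdetA : ∀ i, i < C → DetBy BIG (Atr i) := by
    intro i hi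
    refine (detby_pullback hdetE (trE (-ℓm + (i:ℤ) * (2 * ll - ℓm)))).mono ?_
    intro e he
    exact Finset.mem_biUnion.mpr ⟨i, Finset.mem_range.mpr hi, Finset.mem_union_left _ he⟩
  have hdetB : ∀ i, i < C → DetBy BIG (Bfl i) := by
    intro i hi
    refine (detby_pullback hdetE
      (flE ((-ℓm + (i:ℤ) * (2 * ll - ℓm)) + 2 * ll + ℓm))).mono ?_
    intro e he
    exact Finset.mem_biUnion.mpr ⟨i, Finset.mem_range.mpr hi, Finset.mem_union_right _ he⟩
  set P : ℝ := (μ (EklSet kk ll)).toReal with hPdef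
  have hprobA : ∀ i : ℕ, (μ (Atr i)).toReal = P :=
    fun i => pullback_prob hP hform hdetE _ (trE_inj _)
  have hprobB : ∀ i : ℕ, (μ (Bfl i)).toReal = P :=
    fun i => pullback_prob hP hform hdetE _ (flE_inj _)
  have hPnn : (0:ℝ) ≤ P := ENNReal.toReal_nonneg
  have hpair : ∀ i, i < C → P ^ 2 ≤ (μ (Fev i)).toReal := by
    intro i hi
    have hh := harris_measure hP hp0 hp1 hform (hdetA i hi) (hdetB i hi)
      (incr_pullback hincE _) (incr_pullback hincE _)
    rw [hprobA i, hprobB i] at hh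
    calc P ^ 2 = P * P := sq P
    _ ≤ (μ (Atr i ∩ Bfl i)).toReal := hh
    _ = (μ (Fev i)).toReal := rfl
  -- geometric inclusion of the intersection into the crossing event
  have hsub : (⋂ i ∈ Finset.range C, Fev i)
      ⊆ {ω | CrossedVert ω 0 kk 0 ((C:ℤ) * ll)} := by
    intro ω hω
    simp only [Set.mem_iInter] at hω
    have hstage : ∀ i : ℕ, i < C → ∃ (h : ℤ → ℤ) (a e : ℤ),
        PFn ω kk h a e ∧ h a = 0 ∧ h e = 0 ∧
        (-ℓm + (i:ℤ) * (2*ll - ℓm)) ≤ a ∧ a ≤ (-ℓm + (i:ℤ) * (2*ll - ℓm)) + ℓm ∧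
        (-ℓm + (i:ℤ) * (2*ll - ℓm)) + 2*ll ≤ e ∧
        e ≤ (-ℓm + (i:ℤ) * (2*ll - ℓm)) + 2*ll + ℓm := by
      intro i hi
      have hmem := hω i (Finset.mem_range.mpr hi)
      exact stage hl1 hlm0 hlml hlm1 hlme (hte i) hmem.1 hmem.2
    obtain ⟨σ, a, e, hpσ, hσa, hσe, ha0, he1, he2⟩ :=
      chain hl1 hlm0 hlml C hstage (C-1) (by omega)
    have hcast : (((C-1 : ℕ)) : ℤ) = (C:ℤ) - 1 := by
      have := Nat.cast_sub hC (R := ℤ)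
      simpa using this
    rw [hcast] at he1 he2
    have hCnn : (0:ℤ) ≤ (C:ℤ) := by positivity
    have hCl : (C:ℤ) * ll ≤ e := by
      have hnn : (0:ℤ) ≤ (C:ℤ) * (ll - ℓm) := mul_nonneg hCnn (by omega)
      nlinarith [he1]
    have h0l : (0:ℤ) ≤ (C:ℤ) * ll := mul_nonneg hCnn (by omega)
    have hres := pfn_restrict hpσ ha0 hCl
    refine ⟨(σ 0, 0), (σ ((C:ℤ) * ll), (C:ℤ) * ll), rfl, rfl, ?_⟩
    exact pfn_to_connIn (box 0 kk 0 ((C:ℤ) * ll)) hres h0l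
      (fun y hy hy' => ⟨(hres.1 y hy hy').1, (hres.1 y hy hy').2.1, hy, hy',
        (hres.1 y hy hy').2.2⟩)
  -- put everything together
  have hiter := harris_iter hP hp0 hp1 hform Fev C
    (fun i hi => (hdetA i hi).inter (hdetB i hi))
    (fun i hi => (incr_pullback hincE _).inter (incr_pullback hincE _))
  have hprod : (P ^ 2) ^ C ≤ ∏ i ∈ Finset.range C, (μ (Fev i)).toReal := by
    calc (P ^ 2) ^ C = ∏ _i ∈ Finset.range C, P ^ 2 := by
          rw [Finset.prod_const, Finset.card_range]
    _ ≤ ∏ i ∈ Finset.range C, (μ (Fev i)).toReal :=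
          Finset.prod_le_prod (fun i _ => by positivity)
            (fun i hi => hpair i (Finset.mem_range.mp hi))
  have hmono : (μ (⋂ i ∈ Finset.range C, Fev i)).toReal
      ≤ (μ {ω | CrossedVert ω 0 kk 0 ((C:ℤ) * ll)}).toReal :=
    ENNReal.toReal_mono (measure_ne_top μ _) (measure_mono hsub)
  have hV : V μ k (C * ℓ) = (μ {ω | CrossedVert ω 0 kk 0 ((C:ℤ) * ll)}).toReal := by
    unfold V
    have hc : ((C * ℓ : ℕ) : ℤ) = (C:ℤ) * ll := by push_cast; ring
    rw [hc]
  have hEP : (μ {ω | Ekl ω (k : ℤ) (ℓ : ℤ)}).toReal = P := rfl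
  rw [hEP, hV, pow_mul]
  exact le_trans (le_trans hprod hiter) hmono

end OrientedPerc
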